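/- Let Q be a finite quiver containing three arrows α, β, γ with a common target vertex i, and let A = kQ/I with I admissible. Then there exists a short exact sequence of A-modules 0 → S_i → E₁ ⊕ E₂ ⊕ E₃ → M → 0 where S_i is the simple module at i, each E_t is a 2-dimensional indecomposable module (with dimension 1 at i and 1 at the source of the t-th arrow), and M is an indecomposable 5-dimensional module with dimension vector 2 at i and 1 at each of the sources of α, β, γ. In particular the middle term of this extension of indecomposables has three indecomposable direct summands. -/

import Mathlib

open Module

/-- A representation of a quiver `V` over a field `k`: a vector space at each vertex and a
linear map along each arrow.  For an admissible ideal `I` of the path algebra `kQ`,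
representations on which all paths in `I` act as zero are exactly the `kQ/I`-modules. -/
structure QRep (k : Type) [Field k] (V : Type) [Quiver V] where
  carrier : V → Type
  [acg : ∀ v, AddCommGroup (carrier v)]
  [mod : ∀ v, Module k (carrier v)]
  map : ∀ {a b : V}, (a ⟶ b) → (carrier a →ₗ[k] carrier b)

attribute [instance] QRep.acg QRep.mod

variable {k : Type} [Field k] {V : Type} [Quiver V]

/-- The action of a path on a representation. -/
def QRep.pathMap (X : QRep k V) : ∀ {a b : V},
    Quiver.Path a b → (X.carrier a →ₗ[k] X.carrier b)
  | _, _, Quiver.Path.nil => LinearMap.id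
  | _, _, Quiver.Path.cons p h => (X.map h).comp (X.pathMap p)

/-- The representation is a module over `kQ/I`: all paths in `I` act as zero. -/
def QRep.SatisfiesRelations (X : QRep k V) (I : ∀ {a b : V}, Quiver.Path a b → Prop) :
    Prop :=
  ∀ (a b : V) (p : Quiver.Path a b), I p → X.pathMap p = 0

/-- A subrepresentation, given by a submodule at each vertex stable under the arrows. -/
def QRep.IsSubrep (X : QRep k V) (W : ∀ v, Submodule k (X.carrier v)) : Prop :=
  ∀ (a b : V) (h : a ⟶ b), (W a).map (X.map h) ≤ W b

/-- An indecomposable representation: nonzero and not a direct sum of two nonzero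
subrepresentations. -/
def QRep.Indecomposable (X : QRep k V) : Prop :=
  (∃ v, (⊤ : Submodule k (X.carrier v)) ≠ ⊥) ∧
    ∀ W₁ W₂ : ∀ v, Submodule k (X.carrier v), X.IsSubrep W₁ → X.IsSubrep W₂ →
      (∀ v, W₁ v ⊔ W₂ v = ⊤) → (∀ v, W₁ v ⊓ W₂ v = ⊥) →
      (∀ v, W₁ v = ⊥) ∨ (∀ v, W₂ v = ⊥)

/-- A morphism of representations. -/
structure QHom (X Y : QRep k V) where
  app : ∀ v, X.carrier v →ₗ[k] Y.carrier v
  comm : ∀ (a b : V) (h : a ⟶ b), (Y.map h).comp (app a) = (app b).comp (X.map h)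

/-- The direct sum of three representations. -/
def QRep.prod3 (X Y Z : QRep k V) : QRep k V where
  carrier v := X.carrier v × Y.carrier v × Z.carrier v
  map h := (X.map h).prodMap ((Y.map h).prodMap (Z.map h))

namespace ThreeArrowsAux

attribute [reducible] QRep.prod3

open Classical Module

variable {k : Type} [Field k] {V : Type} [Quiver V]

theorem sigma_arrow_eq {i a b : V} {e : a ⟶ i} {e' : b ⟶ i}
    (h : (⟨a, i, e⟩ : Σ a b : V, a ⟶ b) = ⟨b, i, e'⟩) :
    (⟨a, e⟩ : Σ v : V, v ⟶ i) = ⟨b, e'⟩ := by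
  injection h with h1 h2
  subst h1
  have h2' := eq_of_heq h2
  injection h2' with h3 h4
  rw [h4]

/-- linear equivalence evaluating a prop-indexed function at a proof -/
def propFunEquiv (P : Prop) (hP : P) (M : Type) [AddCommGroup M] [Module k M] :
    (PLift P → M) ≃ₗ[k] M where
  toFun f := f ⟨hP⟩
  invFun m _ := m
  map_add' _ _ := rfl
  map_smul' _ _ := rfl
  left_inv f := funext fun _ => rfl
  right_inv m := rfl

theorem subsingleton_propFun (P : Prop) (hP : ¬P) (M : Type) :
    Subsingleton (PLift P → M) :=
  ⟨fun _ _ => funext fun h => absurd h.down hP⟩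

instance propFunFinite (P : Prop) (M : Type) [AddCommGroup M] [Module k M]
    [Module.Finite k M] : Module.Finite k (PLift P → M) := by
  by_cases hP : P
  · exact Module.Finite.equiv (propFunEquiv P hP M).symm
  · haveI := subsingleton_propFun P hP M
    haveI : Finite (PLift P → M) := Finite.of_subsingleton
    exact Module.Finite.of_finite

theorem fr_k (P : Prop) [Decidable P] :
    finrank k (PLift P → k) = if P then 1 else 0 := by
  split_ifs with hP
  · exact (propFunEquiv P hP k).finrank_eq.trans (finrank_self k)
  · haveI := subsingleton_propFun P hP k
    exact Module.finrank_zero_of_subsingleton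

theorem fr_kk (P : Prop) [Decidable P] :
    finrank k (PLift P → k × k) = if P then 2 else 0 := by
  split_ifs with hP
  · exact (propFunEquiv P hP (k × k)).finrank_eq.trans
      (by rw [Module.finrank_prod, finrank_self])
  · haveI := subsingleton_propFun P hP (k × k)
    exact Module.finrank_zero_of_subsingleton

/-- The simple representation at a vertex. -/
@[reducible] def simpleRep (k : Type) [Field k] {V : Type} [Quiver V] (i : V) : QRep k V where
  carrier v := PLift (v = i) → k
  map _ := 0

/-- The 2-dimensional representation attached to an arrow `ε : j ⟶ i'`. -/
@[reducible] noncomputable def arrowRep (k : Type) [Field k] {V : Type} [Quiver V] {i' j : V}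
    (ε : j ⟶ i') : QRep k V where
  carrier v := (PLift (v = i') → k) × (PLift (v = j) → k)
  map {a b} h :=
    if hs : (⟨a, b, h⟩ : Σ a b : V, a ⟶ b) = ⟨j, i', ε⟩ then
      { toFun := fun x => (fun _ => x.2 ⟨congrArg Sigma.fst hs⟩, 0)
        map_add' := fun x y => Prod.ext rfl (by simp)
        map_smul' := fun c x => Prod.ext rfl (by simp) }
    else 0

/-- The 5-dimensional representation attached to three arrows with common target. -/
@[reducible] noncomputable def bigRep (k : Type) [Field k] {V : Type} [Quiver V] {i j₁ j₂ j₃ : V}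
    (α : j₁ ⟶ i) (β : j₂ ⟶ i) (γ : j₃ ⟶ i) : QRep k V where
  carrier v := (PLift (v = i) → k × k) × (PLift (v = j₁) → k) ×
    (PLift (v = j₂) → k) × (PLift (v = j₃) → k)
  map {a b} h :=
    (if h1 : (⟨a, b, h⟩ : Σ a b : V, a ⟶ b) = ⟨j₁, i, α⟩ then
      { toFun := fun x => (fun _ => (x.2.1 ⟨congrArg Sigma.fst h1⟩, 0), 0, 0, 0)
        map_add' := fun x y => by
          refine Prod.ext (funext fun _ => Prod.ext rfl ?_) ?_ <;> simp
        map_smul' := fun c x => by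
          refine Prod.ext (funext fun _ => Prod.ext rfl ?_) ?_ <;> simp }
    else 0) +
    (if h2 : (⟨a, b, h⟩ : Σ a b : V, a ⟶ b) = ⟨j₂, i, β⟩ then
      { toFun := fun x => (fun _ => (0, x.2.2.1 ⟨congrArg Sigma.fst h2⟩), 0, 0, 0)
        map_add' := fun x y => by
          refine Prod.ext (funext fun _ => Prod.ext ?_ rfl) ?_ <;> simp
        map_smul' := fun c x => by
          refine Prod.ext (funext fun _ => Prod.ext ?_ rfl) ?_ <;> simp }
    else 0) +
    (if h3 : (⟨a, b, h⟩ : Σ a b : V, a ⟶ b) = ⟨j₃, i, γ⟩ then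
      { toFun := fun x => (fun _ =>
            (x.2.2.2 ⟨congrArg Sigma.fst h3⟩, x.2.2.2 ⟨congrArg Sigma.fst h3⟩), 0, 0, 0)
        map_add' := fun x y => by
          refine Prod.ext (funext fun _ => Prod.ext rfl rfl) ?_ <;> simp
        map_smul' := fun c x => by
          refine Prod.ext (funext fun _ => Prod.ext rfl rfl) ?_ <;> simp }
    else 0)

section Rel
variable {k : Type} [Field k] {V : Type} [Quiver V]

theorem pathMap_sq_zero (X : QRep k V)
    (hX : ∀ {a b c : V} (h : a ⟶ b) (h' : b ⟶ c), (X.map h').comp (X.map h) = 0)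
    {a b : V} (p : Quiver.Path a b) (hp : 2 ≤ p.length) : X.pathMap p = 0 := by
  match p with
  | .nil => simp [Quiver.Path.length] at hp
  | .cons .nil h => simp [Quiver.Path.length] at hp
  | .cons (.cons q h₀) h =>
    simp only [QRep.pathMap]
    rw [← LinearMap.comp_assoc, hX h₀ h, LinearMap.zero_comp]

theorem satisfies_of_sq_zero (X : QRep k V)
    (hX : ∀ {a b c : V} (h : a ⟶ b) (h' : b ⟶ c), (X.map h').comp (X.map h) = 0)
    (I : ∀ {a b : V}, Quiver.Path a b → Prop)
    (hlow : ∀ (a b : V) (p : Quiver.Path a b), I p → 2 ≤ p.length) :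
    X.SatisfiesRelations I :=
  fun a b p hp => pathMap_sq_zero X hX p (hlow a b p hp)

theorem simpleRep_sq_zero {i : V} {a b c : V} (h : a ⟶ b) (h' : b ⟶ c) :
    ((simpleRep k i).map h').comp ((simpleRep k i).map h) = 0 := by
  show (0 : _ →ₗ[k] _).comp 0 = 0
  simp

variable {i' j : V} (ε : j ⟶ i')

theorem arrowRep_map_snd {a b : V} (h : a ⟶ b) (x : (arrowRep k ε).carrier a) :
    ((arrowRep k ε).map h x).2 = 0 := by
  simp only [arrowRep]
  split <;> rfl

theorem arrowRep_map_of_snd_zero {a b : V} (h : a ⟶ b) (x : (arrowRep k ε).carrier a)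
    (hx : x.2 = 0) : (arrowRep k ε).map h x = 0 := by
  simp only [arrowRep]
  obtain ⟨x1, x2⟩ := x
  have hx' : x2 = 0 := hx
  subst hx'
  split <;> rfl

theorem arrowRep_sq_zero {a b c : V} (h : a ⟶ b) (h' : b ⟶ c) :
    ((arrowRep k ε).map h').comp ((arrowRep k ε).map h) = 0 := by
  apply LinearMap.ext; intro x
  exact arrowRep_map_of_snd_zero ε h' _ (arrowRep_map_snd ε h x)

variable {i j₁ j₂ j₃ : V} (α : j₁ ⟶ i) (β : j₂ ⟶ i) (γ : j₃ ⟶ i)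

theorem bigRep_map_snd {a b : V} (h : a ⟶ b) (x : (bigRep k α β γ).carrier a) :
    ((bigRep k α β γ).map h x).2 = 0 := by
  simp only [bigRep, LinearMap.add_apply]
  split <;> split <;> split <;>
    simp [Prod.ext_iff, funext_iff, LinearMap.coe_mk, AddHom.coe_mk]

theorem bigRep_map_of_snd_zero {a b : V} (h : a ⟶ b) (x : (bigRep k α β γ).carrier a)
    (hx : x.2 = 0) : (bigRep k α β γ).map h x = 0 := by
  simp only [bigRep, LinearMap.add_apply]
  have h1 : x.2.1 = 0 := by rw [hx]; rfl
  have h2 : x.2.2.1 = 0 := by rw [hx]; rfl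
  have h3 : x.2.2.2 = 0 := by rw [hx]; rfl
  split <;> split <;> split <;>
    simp [Prod.ext_iff, funext_iff, h1, h2, h3, LinearMap.coe_mk, AddHom.coe_mk]

theorem bigRep_sq_zero {a b c : V} (h : a ⟶ b) (h' : b ⟶ c) :
    ((bigRep k α β γ).map h').comp ((bigRep k α β γ).map h) = 0 := by
  apply LinearMap.ext; intro x
  exact bigRep_map_of_snd_zero α β γ h' _ (bigRep_map_snd α β γ h x)

end Rel

section Indec
variable {k : Type} [Field k] {V : Type} [Quiver V]

/-- If an arrow acts through a rank-one map `proj ⬝ u` and some element has `proj = 1`,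
then `u` lands in one of the two complementary subrepresentations. -/
theorem pick_generic (X : QRep k V) {j' i0 : V} (ε : j' ⟶ i0)
    (proj : X.carrier j' →ₗ[k] k) (u : X.carrier i0)
    (heval : ∀ y, X.map ε y = proj y • u)
    (g0 : X.carrier j') (hg0 : proj g0 = 1)
    (W₁ W₂ : ∀ v, Submodule k (X.carrier v)) (h1 : X.IsSubrep W₁) (h2 : X.IsSubrep W₂)
    (hsup : ∀ v, W₁ v ⊔ W₂ v = ⊤) : u ∈ W₁ i0 ∨ u ∈ W₂ i0 := by
  have hg : g0 ∈ W₁ j' ⊔ W₂ j' := by rw [hsup]; exact Submodule.mem_top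
  obtain ⟨y, hy, z, hz, hyz⟩ := Submodule.mem_sup.1 hg
  by_cases hcy : proj y = 0
  · right
    have h' : proj y + proj z = proj g0 := by rw [← map_add, hyz]
    rw [hcy, zero_add, hg0] at h'
    have hm := h2 _ _ ε (Submodule.mem_map_of_mem hz)
    rw [heval, h', one_smul] at hm
    exact hm
  · left
    have hm := h1 _ _ ε (Submodule.mem_map_of_mem hy)
    rw [heval] at hm
    have := (W₁ i0).smul_mem (proj y)⁻¹ hm
    rwa [smul_smul, inv_mul_cancel₀ hcy, one_smul] at this

variable {i' j : V}

/-- The canonical generator of the `i'`-component of `arrowRep`. -/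
def aGen (ε : j ⟶ i') : k →ₗ[k] (arrowRep k ε).carrier i' where
  toFun c := (fun _ => c, 0)
  map_add' c d := Prod.ext rfl (zero_add 0).symm
  map_smul' c d := Prod.ext rfl (smul_zero c).symm

/-- The canonical coordinate of the `j`-component of `arrowRep`. -/
def aProj (ε : j ⟶ i') : (arrowRep k ε).carrier j →ₗ[k] k where
  toFun x := x.2 ⟨rfl⟩
  map_add' _ _ := rfl
  map_smul' _ _ := rfl

theorem aGen_smul (ε : j ⟶ i') (c : k) : c • aGen ε 1 = aGen ε c := by
  rw [← map_smul, smul_eq_mul, mul_one]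

theorem arrowRep_eval (ε : j ⟶ i') (y : (arrowRep k ε).carrier j) :
    (arrowRep k ε).map ε y = aProj ε y • aGen ε 1 := by
  simp only [arrowRep]
  rw [dif_pos trivial]
  refine Prod.ext (funext fun hb => ?_) ?_
  · show y.2 ⟨rfl⟩ = y.2 ⟨rfl⟩ * 1
    rw [mul_one]
  · show (0 : PLift (i' = j) → k) = y.2 ⟨rfl⟩ • (0 : PLift (i' = j) → k)
    rw [smul_zero]

theorem arrowRep_kill (ε : j ⟶ i')
    (W W' : ∀ v, Submodule k ((arrowRep k ε).carrier v))
    (hW' : (arrowRep k ε).IsSubrep W') (hinf : ∀ v, W v ⊓ W' v = ⊥)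
    (hall : ∀ c : k, aGen ε c ∈ W i') : ∀ v, W' v = ⊥ := by
  have hz : ∀ c : k, c ≠ 0 → aGen ε c ∉ W' i' := by
    intro c hc hmem
    have hb : aGen ε c ∈ W i' ⊓ W' i' := Submodule.mem_inf.mpr ⟨hall c, hmem⟩
    rw [hinf i'] at hb
    have h0 := (Submodule.mem_bot k).1 hb
    have h2 := congrArg (fun z : (arrowRep k ε).carrier i' => z.1 ⟨rfl⟩) h0
    exact hc (by simpa [aGen] using h2)
  have key : ∀ y, y ∈ W' j → y.2 ⟨rfl⟩ = 0 := by
    intro y hy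
    by_contra hne
    have hm := hW' _ _ ε (Submodule.mem_map_of_mem hy)
    rw [arrowRep_eval ε y, aGen_smul] at hm
    exact hz _ hne hm
  intro v
  refine (Submodule.eq_bot_iff _).2 fun x hx => ?_
  have hb : x.2 = 0 := funext fun h => by
    obtain ⟨hd⟩ := h; subst hd; exact key x hx
  refine Prod.ext (funext fun h => ?_) hb
  obtain ⟨hd⟩ := h
  subst hd
  have hxg : x = aGen ε (x.1 ⟨rfl⟩) := Prod.ext (funext fun _ => rfl) hb
  have hmem : x ∈ W _ ⊓ W' _ := Submodule.mem_inf.mpr ⟨by rw [hxg]; exact hall _, hx⟩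
  rw [hinf] at hmem
  have hx0 : x = 0 := by simpa using hmem
  rw [hx0]

theorem arrowRep_indec (ε : j ⟶ i') : (arrowRep k ε).Indecomposable := by
  constructor
  · refine ⟨i', fun htop => ?_⟩
    have h1 : aGen ε 1 ∈ (⊥ : Submodule k ((arrowRep k ε).carrier i')) := by
      rw [← htop]; exact Submodule.mem_top
    have h2 := congrArg (fun z : (arrowRep k ε).carrier i' => z.1 ⟨rfl⟩)
      ((Submodule.mem_bot k).1 h1)
    exact one_ne_zero (α := k) (by simpa [aGen] using h2)
  · intro W₁ W₂ h1 h2 hsup hinf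
    have H := pick_generic (arrowRep k ε) ε (aProj ε) (aGen ε 1) (arrowRep_eval ε)
      (0, fun _ => 1) rfl W₁ W₂ h1 h2 hsup
    rcases H with h | h
    · refine Or.inr (arrowRep_kill ε W₁ W₂ h2 hinf fun c => ?_)
      have := (W₁ i').smul_mem c h
      rwa [aGen_smul] at this
    · refine Or.inl (arrowRep_kill ε W₂ W₁ h1
        (fun v => by rw [inf_comm]; exact hinf v) fun c => ?_)
      have := (W₂ i').smul_mem c h
      rwa [aGen_smul] at this

end Indec

section Indec2
variable {k : Type} [Field k] {V : Type} [Quiver V] {i j₁ j₂ j₃ : V}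

/-- The canonical embedding of `k × k` into the `i`-component of `bigRep`. -/
def bigGen (α : j₁ ⟶ i) (β : j₂ ⟶ i) (γ : j₃ ⟶ i) :
    (k × k) →ₗ[k] (bigRep k α β γ).carrier i where
  toFun c := (fun _ => c, 0, 0, 0)
  map_add' c d := Prod.ext rfl (zero_add 0).symm
  map_smul' c d := Prod.ext rfl (smul_zero c).symm

def bProj₁ (α : j₁ ⟶ i) (β : j₂ ⟶ i) (γ : j₃ ⟶ i) :
    (bigRep k α β γ).carrier j₁ →ₗ[k] k where
  toFun x := x.2.1 ⟨rfl⟩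
  map_add' _ _ := rfl
  map_smul' _ _ := rfl

def bProj₂ (α : j₁ ⟶ i) (β : j₂ ⟶ i) (γ : j₃ ⟶ i) :
    (bigRep k α β γ).carrier j₂ →ₗ[k] k where
  toFun x := x.2.2.1 ⟨rfl⟩
  map_add' _ _ := rfl
  map_smul' _ _ := rfl

def bProj₃ (α : j₁ ⟶ i) (β : j₂ ⟶ i) (γ : j₃ ⟶ i) :
    (bigRep k α β γ).carrier j₃ →ₗ[k] k where
  toFun x := x.2.2.2 ⟨rfl⟩
  map_add' _ _ := rfl
  map_smul' _ _ := rfl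

variable (α : j₁ ⟶ i) (β : j₂ ⟶ i) (γ : j₃ ⟶ i)

theorem bigGen_smul (c : k) (w : k × k) :
    c • bigGen α β γ w = bigGen α β γ (c • w) := by rw [← map_smul]

theorem bigRep_eval₁ (hαβ : (⟨j₁, α⟩ : Σ v : V, v ⟶ i) ≠ ⟨j₂, β⟩)
    (hαγ : (⟨j₁, α⟩ : Σ v : V, v ⟶ i) ≠ ⟨j₃, γ⟩) (y : (bigRep k α β γ).carrier j₁) :
    (bigRep k α β γ).map α y = bProj₁ α β γ y • bigGen α β γ ((1 : k), (0 : k)) := by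
  simp only [bigRep, LinearMap.add_apply]
  rw [dif_pos trivial, dif_neg (fun hh => hαβ (sigma_arrow_eq hh)),
    dif_neg (fun hh => hαγ (sigma_arrow_eq hh))]
  refine Prod.ext (funext fun hb => Prod.ext ?_ ?_) ?_
  · show y.2.1 ⟨rfl⟩ + (0 : k) + (0 : k) = y.2.1 ⟨rfl⟩ * 1
    rw [mul_one, add_zero, add_zero]
  · show (0 : k) + (0 : k) + (0 : k) = y.2.1 ⟨rfl⟩ * 0
    rw [mul_zero, add_zero, add_zero]
  · show ((0, 0, 0) : _ × _ × _) + 0 + 0 = y.2.1 ⟨rfl⟩ • (0 : _ × _ × _)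
    rw [smul_zero, add_zero, add_zero]
    rfl

theorem bigRep_eval₂ (hαβ : (⟨j₁, α⟩ : Σ v : V, v ⟶ i) ≠ ⟨j₂, β⟩)
    (hβγ : (⟨j₂, β⟩ : Σ v : V, v ⟶ i) ≠ ⟨j₃, γ⟩) (y : (bigRep k α β γ).carrier j₂) :
    (bigRep k α β γ).map β y = bProj₂ α β γ y • bigGen α β γ ((0 : k), (1 : k)) := by
  simp only [bigRep, LinearMap.add_apply]
  rw [dif_pos trivial, dif_neg (fun hh => hαβ (sigma_arrow_eq hh).symm),
    dif_neg (fun hh => hβγ (sigma_arrow_eq hh))]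
  refine Prod.ext (funext fun hb => Prod.ext ?_ ?_) ?_
  · show (0 : k) + (0 : k) + (0 : k) = y.2.2.1 ⟨rfl⟩ * 0
    rw [mul_zero, add_zero, add_zero]
  · show (0 : k) + y.2.2.1 ⟨rfl⟩ + (0 : k) = y.2.2.1 ⟨rfl⟩ * 1
    rw [mul_one, zero_add, add_zero]
  · show ((0, 0, 0) : _ × _ × _) + 0 + 0 = y.2.2.1 ⟨rfl⟩ • (0 : _ × _ × _)
    rw [smul_zero, add_zero, add_zero]
    rfl

theorem bigRep_eval₃ (hαγ : (⟨j₁, α⟩ : Σ v : V, v ⟶ i) ≠ ⟨j₃, γ⟩)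
    (hβγ : (⟨j₂, β⟩ : Σ v : V, v ⟶ i) ≠ ⟨j₃, γ⟩) (y : (bigRep k α β γ).carrier j₃) :
    (bigRep k α β γ).map γ y = bProj₃ α β γ y • bigGen α β γ ((1 : k), (1 : k)) := by
  simp only [bigRep, LinearMap.add_apply]
  rw [dif_pos trivial, dif_neg (fun hh => hαγ (sigma_arrow_eq hh).symm),
    dif_neg (fun hh => hβγ (sigma_arrow_eq hh).symm)]
  refine Prod.ext (funext fun hb => Prod.ext ?_ ?_) ?_
  · show (0 : k) + (0 : k) + y.2.2.2 ⟨rfl⟩ = y.2.2.2 ⟨rfl⟩ * 1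
    rw [mul_one, zero_add, zero_add]
  · show (0 : k) + (0 : k) + y.2.2.2 ⟨rfl⟩ = y.2.2.2 ⟨rfl⟩ * 1
    rw [mul_one, zero_add, zero_add]
  · show ((0, 0, 0) : _ × _ × _) + 0 + 0 = y.2.2.2 ⟨rfl⟩ • (0 : _ × _ × _)
    rw [smul_zero, add_zero, add_zero]
    rfl

theorem bigGen_spanPair (U : Submodule k ((bigRep k α β γ).carrier i)) (w w' : k × k)
    (hdet : w.1 * w'.2 - w.2 * w'.1 ≠ 0)
    (hw : bigGen α β γ w ∈ U) (hw' : bigGen α β γ w' ∈ U) (c : k × k) :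
    bigGen α β γ c ∈ U := by
  have hc : c = ((c.1 * w'.2 - c.2 * w'.1) / (w.1 * w'.2 - w.2 * w'.1)) • w +
      ((c.2 * w.1 - c.1 * w.2) / (w.1 * w'.2 - w.2 * w'.1)) • w' := by
    refine Prod.ext ?_ ?_ <;>
      (simp only [Prod.fst_add, Prod.snd_add, Prod.smul_fst, Prod.smul_snd, smul_eq_mul]
       rw [div_mul_eq_mul_div, div_mul_eq_mul_div, ← add_div, eq_div_iff hdet]
       ring)
  rw [hc, map_add, map_smul, map_smul]
  exact U.add_mem (U.smul_mem _ hw) (U.smul_mem _ hw')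

theorem bigRep_kill (hαβ : (⟨j₁, α⟩ : Σ v : V, v ⟶ i) ≠ ⟨j₂, β⟩)
    (hαγ : (⟨j₁, α⟩ : Σ v : V, v ⟶ i) ≠ ⟨j₃, γ⟩)
    (hβγ : (⟨j₂, β⟩ : Σ v : V, v ⟶ i) ≠ ⟨j₃, γ⟩)
    (W W' : ∀ v, Submodule k ((bigRep k α β γ).carrier v))
    (hW' : (bigRep k α β γ).IsSubrep W') (hinf : ∀ v, W v ⊓ W' v = ⊥)
    (hall : ∀ c : k × k, bigGen α β γ c ∈ W i) : ∀ v, W' v = ⊥ := by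
  have hz : ∀ c : k × k, c ≠ 0 → bigGen α β γ c ∉ W' i := by
    intro c hc hmem
    have hb : bigGen α β γ c ∈ W i ⊓ W' i := Submodule.mem_inf.mpr ⟨hall c, hmem⟩
    rw [hinf i] at hb
    have h0 := (Submodule.mem_bot k).1 hb
    have h2 := congrArg (fun z : (bigRep k α β γ).carrier i => z.1 ⟨rfl⟩) h0
    exact hc (by simpa [bigGen] using h2)
  have key₁ : ∀ y, y ∈ W' j₁ → y.2.1 ⟨rfl⟩ = 0 := by
    intro y hy
    by_contra hne
    have hm := hW' _ _ α (Submodule.mem_map_of_mem hy)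
    rw [bigRep_eval₁ α β γ hαβ hαγ y, bigGen_smul] at hm
    refine hz _ (fun hcc => hne ?_) hm
    have := congrArg (fun p : k × k => p.1) hcc
    exact (by simpa using this : bProj₁ α β γ y = 0)
  have key₂ : ∀ y, y ∈ W' j₂ → y.2.2.1 ⟨rfl⟩ = 0 := by
    intro y hy
    by_contra hne
    have hm := hW' _ _ β (Submodule.mem_map_of_mem hy)
    rw [bigRep_eval₂ α β γ hαβ hβγ y, bigGen_smul] at hm
    refine hz _ (fun hcc => hne ?_) hm
    have := congrArg (fun p : k × k => p.2) hcc
    exact (by simpa using this : bProj₂ α β γ y = 0)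
  have key₃ : ∀ y, y ∈ W' j₃ → y.2.2.2 ⟨rfl⟩ = 0 := by
    intro y hy
    by_contra hne
    have hm := hW' _ _ γ (Submodule.mem_map_of_mem hy)
    rw [bigRep_eval₃ α β γ hαγ hβγ y, bigGen_smul] at hm
    refine hz _ (fun hcc => hne ?_) hm
    have := congrArg (fun p : k × k => p.1) hcc
    exact (by simpa using this : bProj₃ α β γ y = 0)
  intro v
  refine (Submodule.eq_bot_iff _).2 fun x hx => ?_
  have hb₁ : x.2.1 = 0 := funext fun h => by
    obtain ⟨hd⟩ := h; subst hd; exact key₁ x hx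
  have hb₂ : x.2.2.1 = 0 := funext fun h => by
    obtain ⟨hd⟩ := h; subst hd; exact key₂ x hx
  have hb₃ : x.2.2.2 = 0 := funext fun h => by
    obtain ⟨hd⟩ := h; subst hd; exact key₃ x hx
  refine Prod.ext (funext fun h => ?_) (Prod.ext hb₁ (Prod.ext hb₂ hb₃))
  obtain ⟨hd⟩ := h
  subst hd
  have hxg : x = bigGen α β γ (x.1 ⟨rfl⟩) :=
    Prod.ext (funext fun _ => rfl) (Prod.ext hb₁ (Prod.ext hb₂ hb₃))
  have hmem : x ∈ W _ ⊓ W' _ := Submodule.mem_inf.mpr ⟨by rw [hxg]; exact hall _, hx⟩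
  rw [hinf] at hmem
  have hx0 : x = 0 := by simpa using hmem
  rw [hx0]

theorem bigRep_indec (hαβ : (⟨j₁, α⟩ : Σ v : V, v ⟶ i) ≠ ⟨j₂, β⟩)
    (hαγ : (⟨j₁, α⟩ : Σ v : V, v ⟶ i) ≠ ⟨j₃, γ⟩)
    (hβγ : (⟨j₂, β⟩ : Σ v : V, v ⟶ i) ≠ ⟨j₃, γ⟩) :
    (bigRep k α β γ).Indecomposable := by
  constructor
  · refine ⟨i, fun htop => ?_⟩
    have h1 : bigGen α β γ (1, 0) ∈ (⊥ : Submodule k ((bigRep k α β γ).carrier i)) := by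
      rw [← htop]; exact Submodule.mem_top
    have h2 := congrArg (fun z : (bigRep k α β γ).carrier i => (z.1 ⟨rfl⟩).1)
      ((Submodule.mem_bot k).1 h1)
    exact one_ne_zero (α := k) (by simpa [bigGen] using h2)
  · intro W₁ W₂ h1 h2 hsup hinf
    have H₁ := pick_generic (bigRep k α β γ) α (bProj₁ α β γ) (bigGen α β γ (1, 0))
      (bigRep_eval₁ α β γ hαβ hαγ) (0, fun _ => 1, 0, 0) rfl W₁ W₂ h1 h2 hsup
    have H₂ := pick_generic (bigRep k α β γ) β (bProj₂ α β γ) (bigGen α β γ (0, 1))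
      (bigRep_eval₂ α β γ hαβ hβγ) (0, 0, fun _ => 1, 0) rfl W₁ W₂ h1 h2 hsup
    have H₃ := pick_generic (bigRep k α β γ) γ (bProj₃ α β γ) (bigGen α β γ (1, 1))
      (bigRep_eval₃ α β γ hαγ hβγ) (0, 0, 0, fun _ => 1) rfl W₁ W₂ h1 h2 hsup
    have main : (∀ c : k × k, bigGen α β γ c ∈ W₁ i) ∨
        (∀ c : k × k, bigGen α β γ c ∈ W₂ i) := by
      rcases H₁ with hA | hA <;> rcases H₂ with hB | hB <;> rcases H₃ with hC | hC
      · exact Or.inl (bigGen_spanPair α β γ (W₁ i) (1, 0) (0, 1) (by norm_num) hA hB)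
      · exact Or.inl (bigGen_spanPair α β γ (W₁ i) (1, 0) (0, 1) (by norm_num) hA hB)
      · exact Or.inl (bigGen_spanPair α β γ (W₁ i) (1, 0) (1, 1) (by norm_num) hA hC)
      · exact Or.inr (bigGen_spanPair α β γ (W₂ i) (0, 1) (1, 1) (by norm_num) hB hC)
      · exact Or.inl (bigGen_spanPair α β γ (W₁ i) (0, 1) (1, 1) (by norm_num) hB hC)
      · exact Or.inr (bigGen_spanPair α β γ (W₂ i) (1, 0) (1, 1) (by norm_num) hA hC)
      · exact Or.inr (bigGen_spanPair α β γ (W₂ i) (1, 0) (0, 1) (by norm_num) hA hB)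
      · exact Or.inr (bigGen_spanPair α β γ (W₂ i) (1, 0) (0, 1) (by norm_num) hA hB)
    rcases main with hall | hall
    · exact Or.inr (bigRep_kill α β γ hαβ hαγ hβγ W₁ W₂ h2 hinf hall)
    · exact Or.inl (bigRep_kill α β γ hαβ hαγ hβγ W₂ W₁ h1
        (fun v => by rw [inf_comm]; exact hinf v) hall)

end Indec2

section Hom
variable {k : Type} [Field k] {V : Type} [Quiver V] {i j₁ j₂ j₃ : V}
variable (α : j₁ ⟶ i) (β : j₂ ⟶ i) (γ : j₃ ⟶ i)

/-- The inclusion of the simple module into `E₁ ⊕ E₂ ⊕ E₃`. -/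
noncomputable def fHom :
    QHom (simpleRep k i) ((arrowRep k α).prod3 (arrowRep k β) (arrowRep k γ)) where
  app v :=
    { toFun := fun x => ((x, 0), (x, 0), (-x, 0))
      map_add' := fun x y =>
        Prod.ext (Prod.ext rfl (zero_add 0).symm)
          (Prod.ext (Prod.ext rfl (zero_add 0).symm)
            (Prod.ext (neg_add x y) (zero_add 0).symm))
      map_smul' := fun c x =>
        Prod.ext (Prod.ext rfl (smul_zero c).symm)
          (Prod.ext (Prod.ext rfl (smul_zero c).symm)
            (Prod.ext (smul_neg c x).symm (smul_zero c).symm)) }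
  comm := fun a b h => by
    apply LinearMap.ext; intro x
    rw [LinearMap.comp_apply, LinearMap.comp_apply]
    have h0 : (simpleRep k i).map h x = 0 := rfl
    rw [h0, map_zero]
    simp only [QRep.prod3, LinearMap.prodMap_apply, LinearMap.coe_mk, AddHom.coe_mk]
    rw [arrowRep_map_of_snd_zero α h _ rfl, arrowRep_map_of_snd_zero β h _ rfl,
      arrowRep_map_of_snd_zero γ h _ rfl]
    rfl

/-- The projection of `E₁ ⊕ E₂ ⊕ E₃` onto `M`. -/
noncomputable def gHom :
    QHom ((arrowRep k α).prod3 (arrowRep k β) (arrowRep k γ)) (bigRep k α β γ) where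
  app v :=
    { toFun := fun x =>
        (fun hv => (x.1.1 hv + x.2.2.1 hv, x.2.1.1 hv + x.2.2.1 hv),
          x.1.2, x.2.1.2, x.2.2.2)
      map_add' := fun x y => by
        refine Prod.ext (funext fun hv => Prod.ext ?_ ?_)
          (Prod.ext rfl (Prod.ext rfl rfl))
        · exact add_add_add_comm (x.1.1 hv) (y.1.1 hv) (x.2.2.1 hv) (y.2.2.1 hv)
        · exact add_add_add_comm (x.2.1.1 hv) (y.2.1.1 hv) (x.2.2.1 hv) (y.2.2.1 hv)
      map_smul' := fun c x => by
        refine Prod.ext (funext fun hv => Prod.ext ?_ ?_)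
          (Prod.ext rfl (Prod.ext rfl rfl))
        · exact (mul_add c (x.1.1 hv) (x.2.2.1 hv)).symm
        · exact (mul_add c (x.2.1.1 hv) (x.2.2.1 hv)).symm }
  comm := fun a b h => by
    apply LinearMap.ext; intro x
    simp only [QRep.prod3, bigRep, arrowRep, LinearMap.comp_apply, LinearMap.prodMap_apply,
      LinearMap.add_apply, LinearMap.coe_mk, AddHom.coe_mk]
    split <;> split <;> split <;>
      refine Prod.ext (funext fun hv => Prod.ext ?_ ?_)
        (Prod.ext ?_ (Prod.ext ?_ ?_)) <;>
      simp

end Hom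

end ThreeArrowsAux

open ThreeArrowsAux

/-- Let `Q` be a finite quiver containing three (pairwise distinct) arrows `α, β, γ` with
common target `i`, and let `A = kQ/I` with `I` admissible.  Then there is a short exact
sequence of `A`-modules `0 → S_i → E₁ ⊕ E₂ ⊕ E₃ → M → 0` where `S_i` is the simple module
at `i`, each `E_t` is a `2`-dimensional indecomposable with dimension vector supported at
`i` and the source of the `t`-th arrow, and `M` is an indecomposable `5`-dimensional
module with dimension vector `2` at `i` and `1` at each of the sources.  In particular the
middle term of this extension of indecomposables has three indecomposable direct
summands. -/
theorem three_arrows_middle_term_three_summands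
    [Fintype V] [∀ a b : V, Fintype (a ⟶ b)] [DecidableEq V]
    (I : ∀ {a b : V}, Quiver.Path a b → Prop)
    (hadm : ∃ m : ℕ, 2 ≤ m ∧ (∀ (a b : V) (p : Quiver.Path a b), m ≤ p.length → I p) ∧
      (∀ (a b : V) (p : Quiver.Path a b), I p → 2 ≤ p.length))
    (i j₁ j₂ j₃ : V) (α : j₁ ⟶ i) (β : j₂ ⟶ i) (γ : j₃ ⟶ i)
    (hαβ : (⟨j₁, α⟩ : Σ v : V, v ⟶ i) ≠ ⟨j₂, β⟩)
    (hαγ : (⟨j₁, α⟩ : Σ v : V, v ⟶ i) ≠ ⟨j₃, γ⟩)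
    (hβγ : (⟨j₂, β⟩ : Σ v : V, v ⟶ i) ≠ ⟨j₃, γ⟩) :
    ∃ (S E₁ E₂ E₃ M : QRep k V) (f : QHom S (E₁.prod3 E₂ E₃))
      (g : QHom (E₁.prod3 E₂ E₃) M),
      -- all five representations are `A = kQ/I`-modules
      S.SatisfiesRelations I ∧ E₁.SatisfiesRelations I ∧ E₂.SatisfiesRelations I ∧
        E₃.SatisfiesRelations I ∧ M.SatisfiesRelations I ∧
      -- a short exact sequence 0 → S → E₁ ⊕ E₂ ⊕ E₃ → M → 0
      (∀ v, Function.Injective (f.app v)) ∧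
      (∀ v, Function.Surjective (g.app v)) ∧
      (∀ v, LinearMap.range (f.app v) = LinearMap.ker (g.app v)) ∧
      -- S is the simple module at i
      (∀ v, finrank k (S.carrier v) = if v = i then 1 else 0) ∧
      (∀ (a b : V) (h : a ⟶ b), S.map h = 0) ∧
      -- the E_t are 2-dimensional indecomposables with the expected dimension vectors
      E₁.Indecomposable ∧ E₂.Indecomposable ∧ E₃.Indecomposable ∧
      (∀ v, finrank k (E₁.carrier v) =
        (if v = i then 1 else 0) + (if v = j₁ then 1 else 0)) ∧
      (∀ v, finrank k (E₂.carrier v) =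
        (if v = i then 1 else 0) + (if v = j₂ then 1 else 0)) ∧
      (∀ v, finrank k (E₃.carrier v) =
        (if v = i then 1 else 0) + (if v = j₃ then 1 else 0)) ∧
      -- M is an indecomposable 5-dimensional module with the expected dimension vector
      M.Indecomposable ∧
      (∀ v, finrank k (M.carrier v) = (if v = i then 2 else 0) +
        (if v = j₁ then 1 else 0) + (if v = j₂ then 1 else 0) +
        (if v = j₃ then 1 else 0)) := by
  obtain ⟨m, hm2, hup, hlow⟩ := hadm
  refine ⟨simpleRep k i, arrowRep k α, arrowRep k β, arrowRep k γ, bigRep k α β γ,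
    fHom α β γ, gHom α β γ, ?_, ?_, ?_, ?_, ?_, ?_, ?_, ?_, ?_, ?_, ?_, ?_, ?_, ?_, ?_,
    ?_, ?_, ?_⟩
  · exact fun a b p hp =>
      pathMap_sq_zero _ (fun h h' => simpleRep_sq_zero h h') p (hlow a b p hp)
  · exact fun a b p hp =>
      pathMap_sq_zero _ (fun h h' => arrowRep_sq_zero α h h') p (hlow a b p hp)
  · exact fun a b p hp =>
      pathMap_sq_zero _ (fun h h' => arrowRep_sq_zero β h h') p (hlow a b p hp)
  · exact fun a b p hp =>
      pathMap_sq_zero _ (fun h h' => arrowRep_sq_zero γ h h') p (hlow a b p hp)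
  · exact fun a b p hp =>
      pathMap_sq_zero _ (fun h h' => bigRep_sq_zero α β γ h h') p (hlow a b p hp)
  · -- injectivity of f
    intro v x y hxy
    exact congrArg (fun z : ((arrowRep k α).prod3 (arrowRep k β)
      (arrowRep k γ)).carrier v => z.1.1) hxy
  · -- surjectivity of g
    intro v y
    refine ⟨((fun hv => (y.1 hv).1, y.2.1), (fun hv => (y.1 hv).2, y.2.2.1),
      (0, y.2.2.2)), ?_⟩
    refine Prod.ext (funext fun hv => Prod.ext ?_ ?_) (Prod.ext rfl (Prod.ext rfl rfl)) <;>
      exact add_zero _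
  · -- exactness
    intro v
    ext z
    simp only [LinearMap.mem_range, LinearMap.mem_ker]
    constructor
    · rintro ⟨x, rfl⟩
      refine Prod.ext (funext fun hv => Prod.ext ?_ ?_) (Prod.ext rfl (Prod.ext rfl rfl)) <;>
        exact add_neg_cancel _
    · intro hz
      have e1 : ∀ hv : PLift (v = i), z.1.1 hv + z.2.2.1 hv = 0 := fun hv =>
        congrArg (fun p : k × k => p.1)
          (congrFun (congrArg (fun w : (bigRep k α β γ).carrier v => w.1) hz) hv)
      have e2 : ∀ hv : PLift (v = i), z.2.1.1 hv + z.2.2.1 hv = 0 := fun hv =>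
        congrArg (fun p : k × k => p.2)
          (congrFun (congrArg (fun w : (bigRep k α β γ).carrier v => w.1) hz) hv)
      have b1 : z.1.2 = 0 :=
        congrArg (fun w : (bigRep k α β γ).carrier v => w.2.1) hz
      have b2 : z.2.1.2 = 0 :=
        congrArg (fun w : (bigRep k α β γ).carrier v => w.2.2.1) hz
      have b3 : z.2.2.2 = 0 :=
        congrArg (fun w : (bigRep k α β γ).carrier v => w.2.2.2) hz
      refine ⟨z.1.1, ?_⟩
      refine Prod.ext (Prod.ext rfl b1.symm) (Prod.ext (Prod.ext ?_ b2.symm)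
        (Prod.ext ?_ b3.symm))
      · funext hv
        show z.1.1 hv = z.2.1.1 hv
        rw [eq_neg_of_add_eq_zero_left (e1 hv), ← eq_neg_of_add_eq_zero_left (e2 hv)]
      · funext hv
        show -(z.1.1 hv) = z.2.2.1 hv
        rw [eq_neg_of_add_eq_zero_left (e1 hv), neg_neg]
  · exact fun v => fr_k (v = i)
  · exact fun a b h => rfl
  · exact arrowRep_indec α
  · exact arrowRep_indec β
  · exact arrowRep_indec γ
  · intro v
    simp only [arrowRep]
    rw [Module.finrank_prod, fr_k, fr_k]
  · intro v
    simp only [arrowRep]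
    rw [Module.finrank_prod, fr_k, fr_k]
  · intro v
    simp only [arrowRep]
    rw [Module.finrank_prod, fr_k, fr_k]
  · exact bigRep_indec α β γ hαβ hαγ hβγ
  · intro v
    simp only [bigRep]
    rw [Module.finrank_prod, Module.finrank_prod, Module.finrank_prod, fr_kk, fr_k,
      fr_k, fr_k]
    ring
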